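/- In A₀, for every s ≥ 2 and all m, n ≥ 0 one has R(s)·P(m) = 0 and I(n)·R(s) = 0; explicitly, i(ij−ji)^(s−1) j · (ij−ji)^m j = 0 and i(ij−ji)^n · i(ij−ji)^(s−1) j = 0. (Thus the relations of types 4) and 5) of the q = 0 relation list are redundant.) -/
import Mathlib


open FreeAlgebra

noncomputable section

/-- Defining relations for the specialisation at `q = 0` of the generic composition
algebra of the Kronecker quiver, on generators `i = ι ℚ 0` and `j = ι ℚ 1`:
(1) `i^m j^(m+1) i^(m+1) j^(m+2) = i^(2m+1) j^(2m+3)` for all `m ≥ 0`;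
(2) `i^(n+2) j^(n+1) i^(n+1) j^n = i^(2n+3) j^(2n+1)` for all `n ≥ 0`;
(3) `(i^m j^m)(i^n j^n) = (i^n j^n)(i^m j^m)` for all `m, n ≥ 1`. -/
inductive KroneckerRel0 : FreeAlgebra ℚ (Fin 2) → FreeAlgebra ℚ (Fin 2) → Prop
  | preproj (m : ℕ) :
      KroneckerRel0
        (ι ℚ 0 ^ m * ι ℚ 1 ^ (m + 1) * (ι ℚ 0 ^ (m + 1) * ι ℚ 1 ^ (m + 2)))
        (ι ℚ 0 ^ (2 * m + 1) * ι ℚ 1 ^ (2 * m + 3))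
  | preinj (n : ℕ) :
      KroneckerRel0
        (ι ℚ 0 ^ (n + 2) * ι ℚ 1 ^ (n + 1) * (ι ℚ 0 ^ (n + 1) * ι ℚ 1 ^ n))
        (ι ℚ 0 ^ (2 * n + 3) * ι ℚ 1 ^ (2 * n + 1))
  | deltaComm (m n : ℕ) (hm : 1 ≤ m) (hn : 1 ≤ n) :
      KroneckerRel0
        (ι ℚ 0 ^ m * ι ℚ 1 ^ m * (ι ℚ 0 ^ n * ι ℚ 1 ^ n))
        (ι ℚ 0 ^ n * ι ℚ 1 ^ n * (ι ℚ 0 ^ m * ι ℚ 1 ^ m))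

/-- `A₀`, the composition algebra of the Kronecker quiver specialised at `q = 0`,
presented by generators `i, j` and the relations above. -/
abbrev A0 : Type := RingQuot KroneckerRel0

/-- The generator `i` of `A₀`. -/
def iA : A0 := RingQuot.mkAlgHom ℚ KroneckerRel0 (ι ℚ 0)

/-- The generator `j` of `A₀`. -/
def jA : A0 := RingQuot.mkAlgHom ℚ KroneckerRel0 (ι ℚ 1)

/-- The commutator `ij - ji` in `A₀`. -/
def cA : A0 := iA * jA - jA * iA

/-- `P(m) = (ij - ji)^m j` in `A₀`. -/
def PA (m : ℕ) : A0 := cA ^ m * jA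

/-- `I(n) = i (ij - ji)^n` in `A₀`. -/
def IA (n : ℕ) : A0 := iA * cA ^ n

/-- `R(1) = ij - ji` and `R(s+1) = i (ij - ji)^s j` for `s ≥ 1` in `A₀`
(the value at `0` is junk). -/
def RA : ℕ → A0
  | 0 => 0
  | 1 => cA
  | (s + 2) => iA * cA ^ (s + 1) * jA

/-- `δ_m = i^m j^m` in `A₀`. -/
def deltaA (m : ℕ) : A0 := iA ^ m * jA ^ m

-- ===== auxiliary definitions and lemmas for the proof =====

/-- Relation (1) in `A₀`. -/
lemma rel1' (m : ℕ) :
    iA ^ m * jA ^ (m+1) * (iA ^ (m+1) * jA ^ (m+2)) = iA ^ (2*m+1) * jA ^ (2*m+3) := by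
  have h := RingQuot.mkAlgHom_rel ℚ (KroneckerRel0.preproj m)
  simpa only [iA, jA, map_mul, map_pow] using h

/-- Relation (2) in `A₀`. -/
lemma rel2' (n : ℕ) :
    iA ^ (n+2) * jA ^ (n+1) * (iA ^ (n+1) * jA ^ n) = iA ^ (2*n+3) * jA ^ (2*n+1) := by
  have h := RingQuot.mkAlgHom_rel ℚ (KroneckerRel0.preinj n)
  simpa only [iA, jA, map_mul, map_pow] using h

/-- Relation (3) in `A₀`. -/
lemma rel3' (m n : ℕ) (hm : 1 ≤ m) (hn : 1 ≤ n) :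
    iA^m*jA^m*(iA^n*jA^n) = iA^n*jA^n*(iA^m*jA^m) := by
  have h := RingQuot.mkAlgHom_rel ℚ (KroneckerRel0.deltaComm m n hm hn)
  simpa only [iA, jA, map_mul, map_pow] using h

/-- Abbreviation `d k = δ_k`. -/
def dd (k : ℕ) : A0 := iA^k * jA^k

lemma dd_comm (m n : ℕ) : dd m * dd n = dd n * dd m := by
  match m, n with
  | 0, n => simp [dd]
  | (m+1), 0 => simp [dd]
  | (m+1), (n+1) => exact rel3' (m+1) (n+1) (by omega) (by omega)

/-- `c j² = 0`. -/
lemma F1 : cA * jA * jA = 0 := by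
  have h := rel1' 0
  norm_num at h
  have h2 : cA * jA * jA = iA * jA^3 - jA * (iA * jA^2) := by
    simp only [cA, mul_sub, sub_mul, mul_neg, neg_mul, neg_neg, pow_succ, pow_zero, one_mul, mul_one, mul_assoc] <;> abel
  rw [h2, h, sub_self]

/-- `i² c = 0`. -/
lemma F2 : iA * iA * cA = 0 := by
  have h := rel2' 0
  norm_num at h
  have h2 : iA * iA * cA = iA^3*jA - iA^2*jA*iA := by
    simp only [cA, mul_sub, sub_mul, mul_neg, neg_mul, neg_neg, pow_succ, pow_zero, one_mul, mul_one, mul_assoc] <;> abel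
  rw [h2, ← h, sub_self]

/-- `c j c = c j i j`. -/
lemma F3 : cA * jA * cA = cA * jA * (iA*jA) := by
  have h : cA*jA*cA = cA*jA*(iA*jA) - cA*jA*jA*iA := by
    simp only [cA, mul_sub, sub_mul, mul_neg, neg_mul, neg_neg, pow_succ, pow_zero, one_mul, mul_one, mul_assoc] <;> abel
  rw [h, F1, zero_mul, sub_zero]

/-- `c i c = (ij)(ic)`. -/
lemma F3' : cA * iA * cA = (iA*jA) * (iA*cA) := by
  have h : cA*iA*cA = (iA*jA)*(iA*cA) - jA*(iA*iA*cA) := by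
    simp only [cA, mul_sub, sub_mul, mul_neg, neg_mul, neg_neg, pow_succ, pow_zero, one_mul, mul_one, mul_assoc] <;> abel
  rw [h, F2, mul_zero, sub_zero]

/-- `i²ji = i³j`, product form. -/
lemma rel2_0 : iA*iA*jA*iA = iA*(iA*(iA*jA)) := by
  have h := rel2' 0
  norm_num at h
  calc iA*iA*jA*iA = iA^2*jA*iA := by noncomm_ring
    _ = iA^3*jA := h
    _ = iA*(iA*(iA*jA)) := by noncomm_ring

/-- `i²j i^r = i^(r+2) j`, in a convenient product form. -/
lemma K0 : ∀ r : ℕ, iA*iA*jA*iA^r = iA*(iA*(iA^r*jA))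
  | 0 => by simp [mul_assoc]
  | (r+1) => by
    calc iA*iA*jA*iA^(r+1) = iA*iA*jA*iA*iA^r := by
          rw [pow_succ' iA r]; simp only [mul_assoc]
      _ = iA*(iA*(iA*jA))*iA^r := by rw [rel2_0]
      _ = iA*(iA*iA*jA*iA^r) := by simp only [mul_assoc]
      _ = iA*(iA*(iA*(iA^r*jA))) := by rw [K0 r]
      _ = iA*(iA*(iA^(r+1)*jA)) := by rw [pow_succ' iA r]; simp only [mul_assoc]

/-- `i^(r+1) j^r (ij) = i^(r+2) j^(r+1)`. -/
lemma Kk : ∀ r : ℕ, iA^(r+1)*jA^r*(iA*jA) = iA^(r+1+1)*jA^(r+1)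
  | 0 => by noncomm_ring
  | (r+1) => by
    calc iA^(r+1+1)*jA^(r+1)*(iA*jA)
        = iA*(iA^(r+1)*jA^(r+1)*(iA^1*jA^1)) := by
          rw [pow_succ' iA (r+1), pow_one, pow_one]; simp only [mul_assoc]
      _ = iA*(iA^1*jA^1*(iA^(r+1)*jA^(r+1))) := by rw [rel3' (r+1) 1 (by omega) (by omega)]
      _ = iA*iA*jA*iA^(r+1)*jA^(r+1) := by rw [pow_one, pow_one]; simp only [mul_assoc]
      _ = iA*(iA*(iA^(r+1)*jA))*jA^(r+1) := by rw [K0 (r+1)]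
      _ = iA^(r+1+1+1)*jA^(r+1+1) := by
          rw [pow_succ' iA (r+1+1), pow_succ' iA (r+1), pow_succ' jA (r+1)]
          simp only [mul_assoc]

/-- `i^(r+1) j^r c = i^(r+2) j^(r+1) - δ_(r+1) i`. -/
lemma key1 (r : ℕ) : iA^(r+1)*jA^r*cA = iA^(r+1+1)*jA^(r+1) - dd (r+1) * iA := by
  have e1 : iA^(r+1)*jA^r*cA = iA^(r+1)*jA^r*(iA*jA) - dd (r+1)*iA := by
    simp only [cA, dd]
    rw [mul_sub]
    congr 1
    rw [pow_succ jA r]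
    simp only [mul_assoc]
  rw [e1, Kk]

/-- Telescoping lemma: `i^(r+1) j^r c^d i + Σ_{k<d} δ_(r+1+k) (i c^(d-1-k) i) = i^(r+d+1) j^(r+d) i`. -/
lemma Mm : ∀ (e : ℕ) (r : ℕ),
    iA^(r+1) * jA^r * cA^e * iA
      + ∑ k ∈ Finset.range e, dd (r+1+k) * (iA * cA^(e-1-k) * iA)
    = iA^(r+e+1) * jA^(r+e) * iA
  | 0, r => by simp
  | (e+1), r => by
    have hsplit : (∑ k ∈ Finset.range (e+1), dd (r+1+k) * (iA * cA^(e+1-1-k) * iA))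
        = dd (r+1) * (iA * cA^e * iA)
          + ∑ k ∈ Finset.range e, dd (r+1+1+k) * (iA * cA^(e-1-k) * iA) := by
      rw [Finset.sum_range_succ', add_comm]
      have h0 : dd (r+1+0) * (iA * cA^(e+1-1-0) * iA) = dd (r+1) * (iA * cA^e * iA) := by
        norm_num
      rw [h0]
      congr 1
      exact Finset.sum_congr rfl fun k hk => by
        rw [show r+1+(k+1) = r+1+1+k from by omega, show e+1-1-(k+1) = e-1-k from by omega]
    have h0 : iA^(r+1)*jA^r*cA^(e+1)*iA = (iA^(r+1)*jA^r*cA)*(cA^e*iA) := by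
      rw [pow_succ' cA e]; simp only [mul_assoc]
    have hfirst : iA^(r+1)*jA^r*cA^(e+1)*iA
        = iA^(r+1+1)*jA^(r+1)*cA^e*iA - dd (r+1) * (iA*cA^e*iA) := by
      rw [h0, key1 r, sub_mul]
      congr 1 <;> simp only [mul_assoc]
    rw [hsplit, hfirst]
    have hM := Mm e (r+1)
    rw [show r+1+e = r+(e+1) from by omega] at hM
    rw [← hM]
    abel

/-- `R'(t) = i c^t j`; note `R'(0) = δ₁` and `R'(t) = R(t+1)` for `t ≥ 1`. -/
def Rp (t : ℕ) : A0 := iA * cA^t * jA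

lemma Rp_zero : Rp 0 = dd 1 := by simp [Rp, dd]

/-- Free recursion: `R'(t+1) = i c^t i j² - R'(t) δ₁`. -/
lemma Rp_rec (t : ℕ) : Rp (t+1) = iA * cA^t * iA * jA^2 - Rp t * dd 1 := by
  simp only [Rp, dd]
  rw [pow_succ cA t]
  generalize cA ^ t = X
  simp only [cA, mul_sub, sub_mul, mul_neg, neg_mul, neg_neg, pow_succ, pow_zero, one_mul, mul_one, mul_assoc] <;> abel

/-- Master identity: `δ_(S+1) = Σ_{k≤S} δ_k R'(S-k)`. -/
lemma Ee : ∀ S : ℕ, dd (S+1) = ∑ k ∈ Finset.range (S+1), dd k * Rp (S-k)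
  | 0 => by simp [dd, Rp]
  | (S+1) => by
    have IH := Ee S
    rw [Finset.sum_range_succ, Nat.sub_self]
    have hsum : ∀ k ∈ Finset.range (S+1), dd k * Rp (S+1-k)
        = dd k * (iA*cA^(S-k)*iA) * jA^2 - dd k * Rp (S-k) * dd 1 := by
      intro k hk
      rw [Finset.mem_range] at hk
      rw [show S+1-k = (S-k)+1 from by omega, Rp_rec (S-k), mul_sub]
      congr 1 <;> simp only [mul_assoc]
    rw [Finset.sum_congr rfl hsum, Finset.sum_sub_distrib,
        ← Finset.sum_mul, ← Finset.sum_mul, ← IH]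
    have hG : (∑ k ∈ Finset.range (S+1), dd k * (iA*cA^(S-k)*iA)) = iA^(S+1)*jA^S*iA := by
      rw [Finset.sum_range_succ', add_comm]
      have h0 : dd 0 * (iA*cA^(S-0)*iA) = iA^(0+1)*jA^0*cA^S*iA := by
        simp [dd, mul_assoc]
      rw [h0]
      have hM := Mm S 0
      rw [show (0:ℕ)+S = S from by omega] at hM
      rw [← hM]
      congr 1
      exact Finset.sum_congr rfl fun k hk => by
        rw [show k+1 = 0+1+k from by omega, show S-(0+1+k) = S-1-k from by omega]
    have hfin : iA^(S+1)*jA^S*iA*jA^2 = dd (S+1+1) := by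
      have h1 : iA^(S+1)*jA^S*iA*jA^2 = iA^(S+1)*jA^S*(iA*jA)*jA := by
        rw [pow_two jA]; simp only [mul_assoc]
      rw [h1, Kk S]
      simp only [dd, pow_succ, mul_assoc]
    rw [hG, Rp_zero, hfin]
    abel

/-- Each `R'(t)` commutes with every `δ_m`. -/
lemma Rp_comm (m : ℕ) : ∀ t : ℕ, dd m * Rp t = Rp t * dd m := by
  intro t
  induction t using Nat.strong_induction_on with
  | _ t IH =>
    have hE := Ee t
    rw [Finset.sum_range_succ'] at hE
    have h00 : dd 0 * Rp (t-0) = Rp t := by simp [dd]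
    rw [h00] at hE
    have hRp : Rp t = dd (t+1) - ∑ k ∈ Finset.range t, dd (k+1) * Rp (t-(k+1)) := by
      rw [hE]; abel
    rw [hRp, mul_sub, sub_mul, Finset.mul_sum, Finset.sum_mul]
    congr 1
    · exact dd_comm m (t+1)
    · refine Finset.sum_congr rfl fun k hk => ?_
      rw [Finset.mem_range] at hk
      have hlt : t-(k+1) < t := by omega
      calc dd m * (dd (k+1) * Rp (t-(k+1)))
          = dd m * dd (k+1) * Rp (t-(k+1)) := by rw [mul_assoc]
        _ = dd (k+1) * dd m * Rp (t-(k+1)) := by rw [dd_comm]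
        _ = dd (k+1) * (dd m * Rp (t-(k+1))) := by rw [mul_assoc]
        _ = dd (k+1) * (Rp (t-(k+1)) * dd m) := by rw [IH _ hlt]
        _ = dd (k+1) * Rp (t-(k+1)) * dd m := by rw [mul_assoc]

lemma hc_comm (a : ℕ) : (iA*jA)*(iA*cA^(a+1)*jA) = (iA*cA^(a+1)*jA)*(iA*jA) := by
  have h := Rp_comm 1 (a+1)
  simpa [Rp, dd] using h

/-- First goal: `R(a+2) P(m) = 0`. -/
lemma goal1 : ∀ (m a : ℕ), iA * cA^(a+1) * jA * (cA^m * jA) = 0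
  | 0, a => by
    have h : iA * cA^(a+1) * jA * (cA^0 * jA) = iA * cA^a * (cA*jA*jA) := by
      rw [pow_succ cA a, pow_zero]
      simp only [one_mul, mul_assoc]
    rw [h, F1, mul_zero]
  | (m+1), a => by
    have h1 : iA * cA^(a+1) * jA * (cA^(m+1) * jA) = iA * cA^a * (cA*jA*cA) * (cA^m*jA) := by
      rw [pow_succ cA a, pow_succ' cA m]
      simp only [mul_assoc]
    rw [h1, F3]
    have h2 : iA * cA^a * (cA*jA*(iA*jA)) * (cA^m*jA)
        = (iA*cA^(a+1)*jA) * ((iA*jA)*(cA^m*jA)) := by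
      rw [pow_succ cA a]; simp only [mul_assoc]
    rw [h2]
    have h3 : (iA*cA^(a+1)*jA) * ((iA*jA)*(cA^m*jA))
        = (iA*jA) * (iA*cA^(a+1)*jA*(cA^m*jA)) := by
      rw [← mul_assoc, ← hc_comm a]
      simp only [mul_assoc]
    rw [h3, goal1 m a, mul_zero]

/-- Second goal: `I(n) R(a+2) = 0`. -/
lemma goal2 : ∀ (n a : ℕ), iA * cA^n * (iA * cA^(a+1) * jA) = 0
  | 0, a => by
    have h : iA * cA^0 * (iA * cA^(a+1) * jA) = iA*iA*cA * (cA^a*jA) := by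
      rw [pow_zero, pow_succ' cA a]
      simp only [mul_one, mul_assoc]
    rw [h, F2, zero_mul]
  | (n+1), a => by
    have h1 : iA * cA^(n+1) * (iA * cA^(a+1) * jA) = iA*cA^n*(cA*iA*cA)*(cA^a*jA) := by
      rw [pow_succ cA n, pow_succ' cA a]
      simp only [mul_assoc]
    rw [h1, F3']
    have h2 : iA*cA^n*((iA*jA)*(iA*cA))*(cA^a*jA) = iA*cA^n*((iA*jA)*(iA*cA^(a+1)*jA)) := by
      rw [pow_succ' cA a]
      simp only [mul_assoc]
    rw [h2, hc_comm a]
    have h3 : iA*cA^n*((iA*cA^(a+1)*jA)*(iA*jA)) = (iA*cA^n*(iA*cA^(a+1)*jA))*(iA*jA) := by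
      simp only [mul_assoc]
    rw [h3, goal2 n a, zero_mul]

/-- In `A₀`, for every `s ≥ 2` and all `m, n ≥ 0`, `R(s) P(m) = 0` and
`I(n) R(s) = 0`; explicitly `i (ij-ji)^(s-1) j · (ij-ji)^m j = 0` and
`i (ij-ji)^n · i (ij-ji)^(s-1) j = 0`. -/
theorem regular_kills_preprojective_preinjective (s m n : ℕ) (hs : 2 ≤ s) :
    (iA * (iA * jA - jA * iA) ^ (s - 1) * jA) * ((iA * jA - jA * iA) ^ m * jA) = 0 ∧
    (iA * (iA * jA - jA * iA) ^ n) * (iA * (iA * jA - jA * iA) ^ (s - 1) * jA) = 0 := by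
  obtain ⟨a, rfl⟩ : ∃ a, s = a + 2 := ⟨s - 2, by omega⟩
  constructor
  · have h := goal1 m a
    simp only [cA] at h
    rw [show a+2-1 = a+1 from by omega]
    exact h
  · have h := goal2 n a
    simp only [cA] at h
    rw [show a+2-1 = a+1 from by omega]
    exact h
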